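/- Let Γ be a nonempty totally ordered set without a last element, and for each γ ∈ Γ let A_γ be a nonzero subgroup of ℝ. If the Hahn product G = H_{γ∈Γ} A_γ is non-divisible, then G is closed in its divisible hull: no element of div(G) \ G is a limit point of G in the order topology. -/

import Mathlib

open HahnSeries

private lemma leadingCoeff_neg' {Γ : Type*} [LinearOrder Γ] (d : HahnSeries Γ ℝ) :
    (-d).leadingCoeff = -d.leadingCoeff := by
  by_cases h : d = 0
  · simp [h]
  have h' : (-d) ≠ 0 := neg_ne_zero.mpr h
  have hs : (-d).support = d.support := support_neg
  have hmin : (-d).isWF_support.min (support_nonempty_iff.2 h') =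
      d.isWF_support.min (support_nonempty_iff.2 h) := by
    apply le_antisymm
    · refine Set.IsWF.min_le _ _ ?_
      rw [hs]
      exact d.isWF_support.min_mem _
    · refine Set.IsWF.min_le _ _ ?_
      rw [← hs]
      exact (-d).isWF_support.min_mem _
  rw [leadingCoeff_of_ne_zero h', leadingCoeff_of_ne_zero h, coeff_neg]
  simp only [orderTop_neg]

/-- Let `Γ` be a nonempty totally ordered set without a last element and, for each `γ ∈ Γ`,
let `A γ` be a nonzero subgroup of `ℝ`. The Hahn product `G = H_{γ∈Γ} A γ` is realised as
the set of Hahn series over `ℝ` with `γ`-th coefficient in `A γ`; its divisible hull is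
realised inside `HahnSeries Γ ℝ` as the set of series some positive multiple of which lies
in `G`. The order is given by positivity of the leading coefficient. If `G` is
non-divisible, then `G` is closed in its divisible hull: no element of `div(G) \ G` is a
limit point of `G` in the order topology. -/
theorem stmt_9 {Γ : Type*} [LinearOrder Γ] [Nonempty Γ] [NoMaxOrder Γ]
    (A : Γ → AddSubgroup ℝ) (hA : ∀ γ, A γ ≠ ⊥)
    (Gset : Set (HahnSeries Γ ℝ)) (hGset : Gset = {s | ∀ γ, s.coeff γ ∈ A γ})
    (Dhull : Set (HahnSeries Γ ℝ)) (hDhull : Dhull = {s | ∃ n : ℕ, 0 < n ∧ n • s ∈ Gset})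
    (hnondiv : ∃ s ∈ Gset, ∃ n : ℕ, 0 < n ∧ ¬ ∃ t ∈ Gset, n • t = s) :
    ∀ x ∈ Dhull, x ∉ Gset →
      ∃ a b : HahnSeries Γ ℝ, 0 < (x - a).leadingCoeff ∧ 0 < (b - x).leadingCoeff ∧
        ∀ g ∈ Gset, ¬ (0 < (g - a).leadingCoeff ∧ 0 < (b - g).leadingCoeff) := by
  intro x hxD hxG
  rw [hGset] at hxG
  simp only [Set.mem_setOf_eq, not_forall] at hxG
  obtain ⟨γ₀, hγ₀⟩ := hxG
  obtain ⟨γ₁, hγ₁⟩ := exists_gt γ₀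
  refine ⟨x - single γ₁ 1, x + single γ₁ 1, ?_, ?_, ?_⟩
  · rw [sub_sub_cancel, leadingCoeff_of_single]; norm_num
  · rw [add_sub_cancel_left, leadingCoeff_of_single]; norm_num
  · intro g hg
    set d : HahnSeries Γ ℝ := g - x with hd
    have hdc : d.coeff γ₀ ≠ 0 := by
      intro h
      apply hγ₀
      have : x.coeff γ₀ = g.coeff γ₀ := by
        have := h; rw [hd, coeff_sub, sub_eq_zero] at this; exact this.symm
      rw [this]
      exact hGset ▸ hg |>.out γ₀
    have hdo : d.orderTop < (single γ₁ (1 : ℝ)).orderTop := by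
      calc d.orderTop ≤ (γ₀ : WithTop Γ) := orderTop_le_of_coeff_ne_zero hdc
        _ < (γ₁ : WithTop Γ) := WithTop.coe_lt_coe.mpr hγ₁
        _ = (single γ₁ (1 : ℝ)).orderTop := (orderTop_single one_ne_zero).symm
    have h1 : g - (x - single γ₁ 1) = d + single γ₁ 1 := by rw [hd]; abel
    have h2 : x + single γ₁ 1 - g = -d + single γ₁ 1 := by rw [hd]; abel
    rw [h1, h2, leadingCoeff_add_eq_left hdo,
      leadingCoeff_add_eq_left (by rwa [orderTop_neg]), leadingCoeff_neg']
    rintro ⟨h3, h4⟩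
    linarith
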